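/- Let α be a positive root in a reduced root system R, and μ a Weyl group element such that μ⁻¹α is simple. Then the two sets {β ∈ R : β>0, s_α(β)<0, μ⁻¹β<0} and {β ∈ R : β>0, s_α(β)<0, μ⁻¹β>0, β≠α} are disjoint, their union is R⁺_α \ {α} where R⁺_α = {β>0 : s_α(β)<0}, and the map β ↦ −s_α(β) is an involution of R⁺_α \ {α} interchanging these two sets. -/
import Mathlib


open scoped InnerProductSpace

variable {V : Type*} [NormedAddCommGroup V] [InnerProductSpace ℝ V]

/-- The (orthogonal) reflection in the root `α`: `s_α(v) = v - (2⟪v,α⟫/⟪α,α⟫)α`. -/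
noncomputable def sRefl (α v : V) : V := v - (2 * ⟪v, α⟫_ℝ / ⟪α, α⟫_ℝ) • α

/-- The coroot of `α`, identified with a vector via the invariant inner product. -/
noncomputable def coroot (α : V) : V := (2 / ⟪α, α⟫_ℝ) • α

/-- `S_A`: the product of the (commuting) reflections in the pairwise orthogonal
elements of `A`, given by its closed formula. -/
noncomputable def SRefl (A : Finset V) (v : V) : V :=
  v - ∑ α ∈ A, (2 * ⟪v, α⟫_ℝ / ⟪α, α⟫_ℝ) • α

/-- A (reduced) root system in `V`, with the ambient inner product Weyl-invariant. -/
structure IsRootSystem (R : Set V) : Prop where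
  finite : R.Finite
  nonempty : R.Nonempty
  ne_zero : ∀ α ∈ R, α ≠ (0 : V)
  refl_mem : ∀ α ∈ R, ∀ β ∈ R, sRefl α β ∈ R
  integral : ∀ α ∈ R, ∀ β ∈ R, ∃ n : ℤ, 2 * ⟪β, α⟫_ℝ / ⟪α, α⟫_ℝ = (n : ℝ)
  reduced : ∀ α ∈ R, ∀ t : ℝ, t • α ∈ R → t = 1 ∨ t = -1

/-- `α` and `β` are strongly orthogonal: neither their sum nor difference is a root. -/
def StronglyOrthogonal (R : Set V) (α β : V) : Prop := α + β ∉ R ∧ α - β ∉ R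

/-- A strongly orthogonal subset of `R`. -/
def IsSOS (R A : Set V) : Prop := A ⊆ R ∧ A.Pairwise (StronglyOrthogonal R)

/-- A choice of positive roots in `R`. -/
structure IsPositiveSystem (R P : Set V) : Prop where
  subset : P ⊆ R
  mem_or_neg_mem : ∀ α ∈ R, α ∈ P ∨ -α ∈ P
  not_both : ∀ α ∈ P, -α ∉ P
  add_mem : ∀ α ∈ P, ∀ β ∈ P, α + β ∈ R → α + β ∈ P

/-- Property `#(R,>,A)`: for distinct `α₁, α₂ ∈ A` and `β > 0`,
`s_{α₁}(β) < 0` implies `s_{α₂}(β) > 0`. -/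
def PropSharp (P A : Set V) : Prop :=
  ∀ α₁ ∈ A, ∀ α₂ ∈ A, α₁ ≠ α₂ → ∀ β ∈ P, -(sRefl α₁ β) ∈ P → sRefl α₂ β ∈ P

/-- Property `##(R,>,A)`: for disjoint `A₁, A₂ ⊆ A` and `β > 0` with `S_{A₁}(β) < 0`
one has `S_{A₂}(β) > 0` and `S_{A₁}S_{A₂}(β) < 0`. -/
def PropSharpSharp (P : Set V) (A : Finset V) : Prop :=
  ∀ A₁ ⊆ A, ∀ A₂ ⊆ A, Disjoint A₁ A₂ → ∀ β ∈ P, -(SRefl A₁ β) ∈ P →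
    SRefl A₂ β ∈ P ∧ -(SRefl A₁ (SRefl A₂ β)) ∈ P

/-- `R⁺_B = {β : β > 0 ∧ S_B(β) < 0}`. -/
noncomputable def RPlus (P : Set V) (B : Finset V) : Set V :=
  {β | β ∈ P ∧ -(SRefl B β) ∈ P}

/-- The Weyl group of `R`, as the subgroup of linear automorphisms of `V` generated by
the reflections in the roots. -/
noncomputable def weylGroup (R : Set V) : Subgroup (V ≃ₗ[ℝ] V) :=
  Subgroup.closure {w | ∃ α ∈ R, ∀ v, w v = sRefl α v}

/-- `α` is a simple root relative to the positive system `P`. -/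
def IsSimpleRoot (P : Set V) (α : V) : Prop :=
  α ∈ P ∧ ¬∃ β ∈ P, ∃ γ ∈ P, α = β + γ

lemma inner_sRefl_left (α v : V) : ⟪sRefl α v, α⟫_ℝ = -⟪v, α⟫_ℝ := by
  rcases eq_or_ne α 0 with rfl|h
  · simp [sRefl]
  · have h2 : ⟪α,α⟫_ℝ ≠ 0 := inner_self_ne_zero.mpr h
    simp only [sRefl, inner_sub_left, real_inner_smul_left]
    field_simp; ring

lemma sRefl_neg (α v : V) : sRefl α (-v) = - sRefl α v := by
  simp only [sRefl, inner_neg_left]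
  rw [neg_sub']; congr 1
  rw [← neg_smul]; congr 1; ring

lemma sRefl_sRefl (α v : V) : sRefl α (sRefl α v) = v := by
  conv_lhs => rw [sRefl, inner_sRefl_left]
  rw [sRefl]
  simp only [mul_neg, neg_div, neg_smul, sub_neg_eq_add]
  abel

lemma sRefl_self (α : V) (hα : α ≠ 0) : sRefl α α = -α := by
  have h2 : ⟪α,α⟫_ℝ ≠ 0 := inner_self_ne_zero.mpr hα
  rw [sRefl, show 2 * ⟪α,α⟫_ℝ / ⟪α,α⟫_ℝ = 2 by field_simp, two_smul]
  abel

lemma inner_sRefl (α u v : V) : ⟪sRefl α u, sRefl α v⟫_ℝ = ⟪u, v⟫_ℝ := by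
  rcases eq_or_ne α 0 with rfl|h
  · simp [sRefl]
  · have h2 : ⟪α,α⟫_ℝ ≠ 0 := inner_self_ne_zero.mpr h
    simp only [sRefl, inner_sub_left, inner_sub_right, real_inner_smul_left,
      real_inner_smul_right, real_inner_comm α v]
    field_simp; ring

lemma sRefl_map {f : V ≃ₗ[ℝ] V} (hf : ∀ u v : V, ⟪f u, f v⟫_ℝ = ⟪u, v⟫_ℝ) (α v : V) :
    f (sRefl α v) = sRefl (f α) (f v) := by
  simp only [sRefl, map_sub, map_smul, hf]

lemma weyl_facts {R : Set V} (hR : IsRootSystem R) {w : V ≃ₗ[ℝ] V} (hw : w ∈ weylGroup R) :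
    (∀ v ∈ R, w v ∈ R) ∧ (∀ u v : V, ⟪w u, w v⟫_ℝ = ⟪u, v⟫_ℝ) ∧
    (∀ v ∈ R, w.symm v ∈ R) ∧ (∀ u v : V, ⟪w.symm u, w.symm v⟫_ℝ = ⟪u, v⟫_ℝ) := by
  induction hw using Subgroup.closure_induction with
  | mem x hx =>
    obtain ⟨γ, hγ, hxγ⟩ := hx
    have hx2 : x * x = 1 := by
      ext v
      show x (x v) = v
      rw [hxγ, hxγ, sRefl_sRefl]
    have hsymm : x.symm = x := by
      have : x⁻¹ = x := inv_eq_of_mul_eq_one_left hx2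
      exact this
    refine ⟨fun v hv => ?_, fun u v => ?_, ?_, ?_⟩
    · rw [hxγ]; exact hR.refl_mem γ hγ v hv
    · rw [hxγ, hxγ]; exact inner_sRefl γ u v
    · rw [hsymm]; intro v hv; rw [hxγ]; exact hR.refl_mem γ hγ v hv
    · rw [hsymm]; intro u v; rw [hxγ, hxγ]; exact inner_sRefl γ u v
  | one => refine ⟨fun v hv => hv, fun u v => rfl, fun v hv => hv, fun u v => rfl⟩
  | mul x y hx hy ihx ihy =>
    obtain ⟨hx1, hx2, hx3, hx4⟩ := ihx
    obtain ⟨hy1, hy2, hy3, hy4⟩ := ihy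
    refine ⟨fun v hv => ?_, fun u v => ?_, fun v hv => ?_, fun u v => ?_⟩
    · show x (y v) ∈ R; exact hx1 _ (hy1 _ hv)
    · show ⟪x (y u), x (y v)⟫_ℝ = _; rw [hx2, hy2]
    · show y.symm (x.symm v) ∈ R; exact hy3 _ (hx3 _ hv)
    · show ⟪y.symm (x.symm u), y.symm (x.symm v)⟫_ℝ = _; rw [hy4, hx4]
  | inv x hx ihx =>
    obtain ⟨hx1, hx2, hx3, hx4⟩ := ihx
    refine ⟨hx3, hx4, ?_, ?_⟩
    · show ∀ v ∈ R, x.symm.symm v ∈ R; simpa using hx1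
    · show ∀ u v : V, ⟪x.symm.symm u, x.symm.symm v⟫_ℝ = ⟪u,v⟫_ℝ; simpa using hx2

lemma neg_mem_root {R : Set V} (hR : IsRootSystem R) {β : V} (hβ : β ∈ R) : -β ∈ R := by
  have := hR.refl_mem β hβ β hβ
  rwa [sRefl_self β (hR.ne_zero β hβ)] at this

lemma root_add_mem {R : Set V} (hR : IsRootSystem R) {β β' : V} (hβ : β ∈ R) (hβ' : β' ∈ R)
    (h2 : β ≠ -β') (hneg : ⟪β, β'⟫_ℝ < 0) : β + β' ∈ R := by
  have pβ : (0:ℝ) < ⟪β,β⟫_ℝ := lt_of_le_of_ne real_inner_self_nonneg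
    (Ne.symm (inner_self_ne_zero.mpr (hR.ne_zero β hβ)))
  have pβ' : (0:ℝ) < ⟪β',β'⟫_ℝ := lt_of_le_of_ne real_inner_self_nonneg
    (Ne.symm (inner_self_ne_zero.mpr (hR.ne_zero β' hβ')))
  obtain ⟨m1, hm1⟩ := hR.integral β' hβ' β hβ
  obtain ⟨m2, hm2⟩ := hR.integral β hβ β' hβ'
  have hm1' : 2 * ⟪β,β'⟫_ℝ = m1 * ⟪β',β'⟫_ℝ := by
    field_simp at hm1; linarith
  have hm2' : 2 * ⟪β,β'⟫_ℝ = m2 * ⟪β,β⟫_ℝ := by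
    have hm2' := hm2
    rw [real_inner_comm β β'] at hm2'
    field_simp at hm2'; linarith
  have hm1neg : m1 < 0 := by
    by_contra h
    push_neg at h
    have : (0:ℝ) ≤ m1 := by exact_mod_cast h
    nlinarith
  have hm2neg : m2 < 0 := by
    by_contra h
    push_neg at h
    have : (0:ℝ) ≤ m2 := by exact_mod_cast h
    nlinarith
  rcases eq_or_ne m1 (-1) with h1|h1
  · have : sRefl β' β = β + β' := by
      rw [sRefl, hm1, h1]
      push_cast
      rw [neg_one_smul]
      abel
    rw [← this]; exact hR.refl_mem β' hβ' β hβ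
  rcases eq_or_ne m2 (-1) with h2'|h2'
  · have : sRefl β β' = β + β' := by
      rw [sRefl, show ⟪β',β⟫_ℝ = ⟪β,β'⟫_ℝ from real_inner_comm β β']
      rw [show 2 * ⟪β,β'⟫_ℝ / ⟪β,β⟫_ℝ = (m2:ℝ) from by field_simp; linarith [hm2'], h2']
      push_cast
      rw [neg_one_smul]
      abel
    rw [← this]; exact hR.refl_mem β hβ β' hβ'
  -- now m1 ≤ -2, m2 ≤ -2
  exfalso
  have hm1le : m1 ≤ -2 := by omega
  have hm2le : m2 ≤ -2 := by omega
  have hcs := real_inner_mul_inner_self_le β β'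
  have hprodR : (m1:ℝ) * m2 ≤ 4 := by
    have h4 : ((m1:ℝ) * m2) * (⟪β,β⟫_ℝ * ⟪β',β'⟫_ℝ) = 4 * (⟪β,β'⟫_ℝ * ⟪β,β'⟫_ℝ) := by
      nlinarith [hm1', hm2']
    nlinarith [mul_pos pβ pβ', hcs, h4]
  have hprod : m1 * m2 ≤ 4 := by exact_mod_cast hprodR
  have hm1eq : m1 = -2 := by nlinarith
  have hm2eq : m2 = -2 := by nlinarith
  have e1 : ⟪β,β'⟫_ℝ = -⟪β',β'⟫_ℝ := by rw [hm1eq] at hm1'; push_cast at hm1'; linarith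
  have e2 : ⟪β,β'⟫_ℝ = -⟪β,β⟫_ℝ := by rw [hm2eq] at hm2'; push_cast at hm2'; linarith
  have hzero : ⟪β + β', β + β'⟫_ℝ = 0 := by
    rw [real_inner_add_add_self]; linarith
  have : β + β' = (0:V) := inner_self_eq_zero.mp hzero
  exact h2 (by linear_combination (norm := abel) this)

lemma simple_sRefl_mem {R P : Set V} (hR : IsRootSystem R) (hP : IsPositiveSystem R P)
    {γ : V} (hγ : IsSimpleRoot P γ) {δ : V} (hδ : δ ∈ P) (hne : δ ≠ γ) : sRefl γ δ ∈ P := by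
  have hγP : γ ∈ P := hγ.1
  have hγR : γ ∈ R := hP.subset hγP
  have hγ0 : γ ≠ 0 := hR.ne_zero γ hγR
  have pγ : (0:ℝ) < ⟪γ,γ⟫_ℝ := lt_of_le_of_ne real_inner_self_nonneg
    (Ne.symm (inner_self_ne_zero.mpr hγ0))
  have key : ∀ N : ℕ, ∀ n : ℤ, n.natAbs ≤ N → ∀ δ : V, δ ∈ P → δ ≠ γ →
      2 * ⟪δ, γ⟫_ℝ = n * ⟪γ, γ⟫_ℝ → -(sRefl γ δ) ∈ P → False := by
    intro N
    induction N with
    | zero =>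
      intro n hn δ hδ hne hn2 hneg
      have hn0 : n = 0 := by omega
      subst hn0
      have h0 : ⟪δ,γ⟫_ℝ = 0 := by push_cast at hn2; linarith
      have : sRefl γ δ = δ := by rw [sRefl, h0]; simp
      rw [this] at hneg
      exact hP.not_both δ hδ hneg
    | succ N ih =>
      intro n hn δ hδ hne hn2 hneg
      have hδR : δ ∈ R := hP.subset hδ
      have hδ0 : δ ≠ 0 := hR.ne_zero δ hδR
      have hdiv : 2 * ⟪δ,γ⟫_ℝ / ⟪γ,γ⟫_ℝ = (n:ℝ) := by field_simp; linarith
      have hεeq : -(sRefl γ δ) = (n:ℝ) • γ - δ := by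
        rw [sRefl, hdiv, neg_sub]
      have hδnegγ : δ ≠ -γ := by
        intro h
        exact hP.not_both δ hδ (by rw [h, neg_neg]; exact hγP)
      -- trichotomy on n
      rcases (by omega : n = 0 ∨ n = 1 ∨ n = -1 ∨ 2 ≤ n ∨ n ≤ -2) with h|h|h|h|h
      · subst h
        rw [show ((0:ℤ):ℝ) = 0 by norm_num, zero_smul, zero_sub] at hεeq
        rw [hεeq] at hneg
        exact hP.not_both δ hδ hneg
      · subst h
        rw [show ((1:ℤ):ℝ) = 1 by norm_num, one_smul] at hεeq
        exact hγ.2 ⟨δ, hδ, _, (hεeq ▸ hneg), by abel⟩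
      · subst h
        have hsum : δ + -(sRefl γ δ) = -γ := by rw [hεeq]; push_cast; module
        have hmem : δ + -(sRefl γ δ) ∈ P :=
          hP.add_mem δ hδ _ hneg (by rw [hsum]; exact neg_mem_root hR hγR)
        rw [hsum] at hmem
        exact hP.not_both γ hγP hmem
      · -- 2 ≤ n
        have hnR : (2:ℝ) ≤ (n:ℝ) := by exact_mod_cast h
        have hip : 0 < ⟪δ,γ⟫_ℝ := by nlinarith
        -- δ - γ is a root
        have hdmem : δ + -γ ∈ R := by
          apply root_add_mem hR hδR (neg_mem_root hR hγR) (by rwa [neg_neg])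
          rw [inner_neg_right]; linarith
        have hdP : δ - γ ∈ P := by
          rcases hP.mem_or_neg_mem _ hdmem with hh|hh
          · rwa [← sub_eq_add_neg] at hh
          · exfalso
            refine hγ.2 ⟨δ, hδ, -(δ + -γ), hh, by abel⟩
        -- ε facts
        have hεR : -(sRefl γ δ) ∈ R := neg_mem_root hR (hR.refl_mem γ hγR δ hδR)
        have hειγ : 0 < ⟪-(sRefl γ δ), γ⟫_ℝ := by
          rw [hεeq, inner_sub_left, real_inner_smul_left]; nlinarith
        have hεneγ : -(sRefl γ δ) ≠ -γ := by
          intro hh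
          exact hP.not_both _ hneg (by rw [hh, neg_neg]; exact hγP)
        have hεneγ1 : -(sRefl γ δ) ≠ γ := by
          intro hh
          rw [hεeq] at hh
          have h2' : δ + γ = (n:ℝ) • γ := by
            rw [add_comm]; exact (sub_eq_iff_eq_add.mp hh).symm
          have h1' : δ = ((n:ℝ)-1) • γ := by rw [sub_smul, one_smul, ← h2']; abel
          rcases hR.reduced γ hγR ((n:ℝ)-1) (h1' ▸ hδR) with hc|hc
          · have hn2' : (n:ℝ) = 2 := by linarith
            exact hne (by rw [h1', hn2']; norm_num)
          · linarith
        have hemem : -(sRefl γ δ) + -γ ∈ R := by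
          apply root_add_mem hR hεR (neg_mem_root hR hγR) (by rwa [neg_neg])
          rw [inner_neg_right]; linarith
        have heP : -(sRefl γ δ) - γ ∈ P := by
          rcases hP.mem_or_neg_mem _ hemem with hh|hh
          · rwa [← sub_eq_add_neg] at hh
          · exfalso
            refine hγ.2 ⟨-(sRefl γ δ), hneg, -(-(sRefl γ δ) + -γ), hh, by abel⟩
        -- recurse with δ' = δ - γ
        have hδ'ne : δ - γ ≠ γ := by
          intro hh
          have : δ = (2:ℝ) • γ := by rw [two_smul]; linear_combination (norm := abel) hh
          rcases hR.reduced γ hγR 2 (this ▸ hδR) with h2|h2 <;> norm_num at h2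
        have hinner' : 2 * ⟪δ - γ, γ⟫_ℝ = ((n - 2 : ℤ):ℝ) * ⟪γ,γ⟫_ℝ := by
          rw [inner_sub_left]; push_cast; linarith
        have hneg' : -(sRefl γ (δ - γ)) ∈ P := by
          have : -(sRefl γ (δ - γ)) = -(sRefl γ δ) - γ := by
            rw [sRefl, show 2 * ⟪δ - γ, γ⟫_ℝ / ⟪γ,γ⟫_ℝ = ((n-2:ℤ):ℝ) from by
              have h7 := hinner'; push_cast at h7 ⊢; field_simp; linarith [h7], hεeq]
            push_cast
            module
          rw [this]; exact heP
        exact ih (n - 2) (by omega) (δ - γ) hdP hδ'ne hinner' hneg'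
      · -- n ≤ -2
        have hnR : (n:ℝ) ≤ -2 := by exact_mod_cast h
        have hip : ⟪δ,γ⟫_ℝ < 0 := by nlinarith
        have hdmem : δ + γ ∈ R := root_add_mem hR hδR hγR hδnegγ hip
        have hdP : δ + γ ∈ P := hP.add_mem δ hδ γ hγP hdmem
        have hεR : -(sRefl γ δ) ∈ R := neg_mem_root hR (hR.refl_mem γ hγR δ hδR)
        have hειγ : ⟪-(sRefl γ δ), γ⟫_ℝ < 0 := by
          rw [hεeq, inner_sub_left, real_inner_smul_left]; nlinarith
        have hεneγ2 : -(sRefl γ δ) ≠ -γ := by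
          intro hh
          exact hP.not_both _ hneg (by rw [hh, neg_neg]; exact hγP)
        have hemem : -(sRefl γ δ) + γ ∈ R := by
          apply root_add_mem hR hεR hγR _ hειγ
          intro hh
          -- -(sRefl γ δ) = -γ handled
          exact hεneγ2 hh
        have heP : -(sRefl γ δ) + γ ∈ P := hP.add_mem _ hneg γ hγP hemem
        have hδ'ne : δ + γ ≠ γ := by
          intro hh
          exact hδ0 (by linear_combination (norm := abel) hh)
        have hinner' : 2 * ⟪δ + γ, γ⟫_ℝ = ((n + 2 : ℤ):ℝ) * ⟪γ,γ⟫_ℝ := by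
          rw [inner_add_left]; push_cast; linarith
        have hneg' : -(sRefl γ (δ + γ)) ∈ P := by
          have : -(sRefl γ (δ + γ)) = -(sRefl γ δ) + γ := by
            rw [sRefl, show 2 * ⟪δ + γ, γ⟫_ℝ / ⟪γ,γ⟫_ℝ = ((n+2:ℤ):ℝ) from by
              have h7 := hinner'; push_cast at h7 ⊢; field_simp; linarith [h7], hεeq]
            push_cast
            module
          rw [this]; exact heP
        exact ih (n + 2) (by omega) (δ + γ) hdP hδ'ne hinner' hneg'
  -- main argument
  have hδR : δ ∈ R := hP.subset hδ
  have hsR : sRefl γ δ ∈ R := hR.refl_mem γ hγR δ hδR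
  rcases hP.mem_or_neg_mem _ hsR with h|h
  · exact h
  · exfalso
    obtain ⟨n, hn⟩ := hR.integral γ hγR δ hδR
    exact key n.natAbs n le_rfl δ hδ hne (by field_simp at hn; linarith) h

/-- Decomposition of `R⁺_α \ {α}` into the two subsets according to the sign of `μ⁻¹β`,
interchanged by the involution `β ↦ -s_α(β)`. -/
theorem statement10 (R P : Set V) (hR : IsRootSystem R) (hP : IsPositiveSystem R P)
    (α : V) (hα : α ∈ P) (μ : V ≃ₗ[ℝ] V) (hμ : μ ∈ weylGroup R)
    (hsimple : IsSimpleRoot P (μ.symm α)) :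
    Disjoint {β | β ∈ P ∧ -(sRefl α β) ∈ P ∧ -(μ.symm β) ∈ P}
      {β | β ∈ P ∧ -(sRefl α β) ∈ P ∧ μ.symm β ∈ P ∧ β ≠ α} ∧
    {β | β ∈ P ∧ -(sRefl α β) ∈ P ∧ -(μ.symm β) ∈ P} ∪
      {β | β ∈ P ∧ -(sRefl α β) ∈ P ∧ μ.symm β ∈ P ∧ β ≠ α} =
      {β | β ∈ P ∧ -(sRefl α β) ∈ P} \ {α} ∧
    (∀ β ∈ {β | β ∈ P ∧ -(sRefl α β) ∈ P} \ {α},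
      -(sRefl α β) ∈ {β | β ∈ P ∧ -(sRefl α β) ∈ P} \ {α} ∧ -(sRefl α (-(sRefl α β))) = β) ∧
    (∀ β ∈ {β | β ∈ P ∧ -(sRefl α β) ∈ P ∧ -(μ.symm β) ∈ P},
      -(sRefl α β) ∈ {β | β ∈ P ∧ -(sRefl α β) ∈ P ∧ μ.symm β ∈ P ∧ β ≠ α}) ∧
    (∀ β ∈ {β | β ∈ P ∧ -(sRefl α β) ∈ P ∧ μ.symm β ∈ P ∧ β ≠ α},
      -(sRefl α β) ∈ {β | β ∈ P ∧ -(sRefl α β) ∈ P ∧ -(μ.symm β) ∈ P}) := by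
  have hαR : α ∈ R := hP.subset hα
  have hα0 : α ≠ 0 := hR.ne_zero α hαR
  obtain ⟨hw1, hw2, hw3, hw4⟩ := weyl_facts hR hμ
  have hconj : ∀ v : V, μ.symm (sRefl α v) = sRefl (μ.symm α) (μ.symm v) :=
    fun v => sRefl_map hw4 α v
  have hγP : μ.symm α ∈ P := hsimple.1
  have hsγ : ∀ δ ∈ P, δ ≠ μ.symm α → sRefl (μ.symm α) δ ∈ P :=
    fun δ hδ hne => simple_sRefl_mem hR hP hsimple hδ hne
  -- basic computations
  have hinv : ∀ v : V, sRefl α (sRefl α v) = v := sRefl_sRefl α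
  have hdouble : ∀ β : V, -(sRefl α (-(sRefl α β))) = β := by
    intro β; rw [sRefl_neg, hinv, neg_neg]
  have hne_alpha : ∀ β : V, β ≠ α → -(sRefl α β) ≠ α := by
    intro β hβ hc
    apply hβ
    have h1 : sRefl α β = -α := neg_eq_iff_eq_neg.mp hc
    have := hinv β
    rw [h1, sRefl_neg, sRefl_self α hα0, neg_neg] at this
    exact this.symm
  have hμγ : μ (μ.symm α) = α := μ.apply_symm_apply α
  refine ⟨?_, ?_, ?_, ?_, ?_⟩
  · -- disjoint
    rw [Set.disjoint_left]
    rintro β ⟨_, _, h3⟩ ⟨_, _, h3', _⟩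
    exact hP.not_both _ h3' h3
  · -- union
    ext β
    simp only [Set.mem_union, Set.mem_setOf_eq, Set.mem_diff, Set.mem_singleton_iff]
    constructor
    · rintro (⟨h1, h2, h3⟩ | ⟨h1, h2, h3, h4⟩)
      · refine ⟨⟨h1, h2⟩, ?_⟩
        rintro rfl
        exact hP.not_both _ hγP h3
      · exact ⟨⟨h1, h2⟩, h4⟩
    · rintro ⟨⟨h1, h2⟩, h4⟩
      rcases hP.mem_or_neg_mem _ (hw3 β (hP.subset h1)) with h | h
      · exact Or.inr ⟨h1, h2, h, h4⟩
      · exact Or.inl ⟨h1, h2, h⟩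
  · -- involution
    rintro β ⟨⟨h1, h2⟩, h4⟩
    simp only [Set.mem_singleton_iff] at h4
    refine ⟨⟨⟨h2, ?_⟩, ?_⟩, hdouble β⟩
    · rw [hdouble β]; exact h1
    · simp only [Set.mem_singleton_iff]
      exact hne_alpha β h4
  · -- first set maps into second
    rintro β ⟨h1, h2, h3⟩
    have hβα : β ≠ α := by
      rintro rfl
      exact hP.not_both _ hγP h3
    refine ⟨h2, by rw [hdouble β]; exact h1, ?_, hne_alpha β hβα⟩
    have key : μ.symm (-(sRefl α β)) = sRefl (μ.symm α) (-(μ.symm β)) := by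
      rw [map_neg, hconj, ← sRefl_neg]
    rw [key]
    apply hsγ _ h3
    intro hc
    have hβ : β = -α := by
      have : μ.symm β = -(μ.symm α) := by rw [← neg_eq_iff_eq_neg.mpr hc.symm]
      have h5 : μ (μ.symm β) = μ (-(μ.symm α)) := by rw [this]
      rw [μ.apply_symm_apply, map_neg, hμγ] at h5
      exact h5
    apply hP.not_both β h1
    rw [hβ, neg_neg]
    exact hα
  · -- second set maps into first
    rintro β ⟨h1, h2, h3, h4⟩
    refine ⟨h2, by rw [hdouble β]; exact h1, ?_⟩
    have key : -(μ.symm (-(sRefl α β))) = sRefl (μ.symm α) (μ.symm β) := by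
      rw [map_neg, neg_neg, hconj]
    rw [key]
    apply hsγ _ h3
    intro hc
    exact h4 (by simpa using congrArg μ hc)
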